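/- arXiv:2101.09011 — 8 statements merged into one kernel-verified Lean document; each statement's English description precedes it below -/
import Mathlib

section
/- Let H be a complex Hilbert space, let A and B be bounded linear operators on H that are normal (each commutes with its adjoint: A·A* = A*·A and B·B* = B*·B), and suppose there is c ∈ ℂ such that A·B* − B*·A = c·I, where I is the identity operator. Let φ ∈ H be a unit vector and put m_A := ⟨φ, Aφ⟩, m_B := ⟨φ, Bφ⟩. Then the fluctuation norms satisfy the Heisenberg-type relation ‖(A − m_A·I)φ‖² · ‖(B − m_B·I)φ‖² ≥ |c|²/4. (Applied with c = −2i to the two-mode quadrature operators Q_T(μ;ψ) and Q_T(μ;ψ+π/2), this gives the uncertainty bound ⟨ΔQ_T(μ;ψ)†ΔQ_T(μ;ψ)⟩·⟨ΔQ_T(μ;ψ±π/2)†ΔQ_T(μ;ψ±π/2)⟩ ≥ 1 of the paper.) -/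
open scoped InnerProductSpace

private lemma norm_star_apply_of_normal
    {H : Type*} [NormedAddCommGroup H] [InnerProductSpace ℂ H] [CompleteSpace H]
    (X : H →L[ℂ] H) (h : X * star X = star X * X) (ξ : H) :
    ‖(star X) ξ‖ = ‖X ξ‖ := by
  have h2 : ⟪(star X) ξ, (star X) ξ⟫_ℂ = ⟪X ξ, X ξ⟫_ℂ := by
    rw [ContinuousLinearMap.star_eq_adjoint, ContinuousLinearMap.adjoint_inner_left]
    have : X ((ContinuousLinearMap.adjoint X) ξ) = (ContinuousLinearMap.adjoint X) (X ξ) := by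
      have := congrArg (fun T : H →L[ℂ] H => T ξ) h
      simpa [ContinuousLinearMap.mul_apply, ContinuousLinearMap.star_eq_adjoint] using this
    rw [this, ContinuousLinearMap.adjoint_inner_right]
  have h3 : (‖(star X) ξ‖ : ℂ) ^ 2 = (‖X ξ‖ : ℂ) ^ 2 := by
    rwa [inner_self_eq_norm_sq_to_K, inner_self_eq_norm_sq_to_K] at h2
  have h4 : ‖(star X) ξ‖ ^ 2 = ‖X ξ‖ ^ 2 := by exact_mod_cast h3
  nlinarith [norm_nonneg ((star X) ξ), norm_nonneg (X ξ)]

private lemma delta_normal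
    {H : Type*} [NormedAddCommGroup H] [InnerProductSpace ℂ H] [CompleteSpace H]
    (X : H →L[ℂ] H) (h : X * star X = star X * X) (m : ℂ) :
    (X - m • 1) * star (X - m • 1) = star (X - m • 1) * (X - m • 1) := by
  simp only [star_sub, star_smul, star_one, RCLike.star_def]
  simp only [sub_mul, mul_sub, smul_mul_assoc, mul_smul_comm, one_mul, mul_one, h]
  simp only [smul_sub, smul_smul]
  module

/-- Heisenberg-type uncertainty relation for two normal bounded operators whose
commutator `[A, B*]` is a scalar `c`: the product of the variances of their
fluctuations in any unit vector state is at least `|c|²/4`. -/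
theorem heisenberg_relation_normal_operators
    {H : Type*} [NormedAddCommGroup H] [InnerProductSpace ℂ H] [CompleteSpace H]
    (A B : H →L[ℂ] H) (c : ℂ)
    (hA : A * star A = star A * A) (hB : B * star B = star B * B)
    (hcomm : A * star B - star B * A = c • (1 : H →L[ℂ] H))
    (φ : H) (hφ : ‖φ‖ = 1) :
    ‖(A - (⟪φ, A φ⟫_ℂ) • (1 : H →L[ℂ] H)) φ‖ ^ 2 *
      ‖(B - (⟪φ, B φ⟫_ℂ) • (1 : H →L[ℂ] H)) φ‖ ^ 2 ≥ ‖c‖ ^ 2 / 4 := by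
  set a := ⟪φ, A φ⟫_ℂ
  set b := ⟪φ, B φ⟫_ℂ
  set ΔA := A - a • (1 : H →L[ℂ] H) with hΔA
  set ΔB := B - b • (1 : H →L[ℂ] H) with hΔB
  have hΔAnorm := delta_normal A hA a
  have hΔBnorm := delta_normal B hB b
  -- commutator of deltas
  have hcomm' : ΔA * star ΔB - star ΔB * ΔA = c • (1 : H →L[ℂ] H) := by
    rw [← hcomm, hΔA, hΔB]
    simp only [star_sub, star_smul, star_one, RCLike.star_def, mul_sub, sub_mul,
      smul_mul_assoc, mul_smul_comm, one_mul, mul_one, smul_sub, smul_smul]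
    module
  -- inner product identity
  have key : c = ⟪(star ΔA) φ, (star ΔB) φ⟫_ℂ - ⟪ΔB φ, ΔA φ⟫_ℂ := by
    have h1 : ⟪φ, (ΔA * star ΔB - star ΔB * ΔA) φ⟫_ℂ = c := by
      rw [hcomm']
      simp only [ContinuousLinearMap.smul_apply, ContinuousLinearMap.one_apply,
        inner_smul_right]
      rw [inner_self_eq_norm_sq_to_K, hφ]
      simp
    rw [← h1]
    simp only [ContinuousLinearMap.sub_apply, ContinuousLinearMap.mul_apply, inner_sub_right]
    rw [show ΔA ((star ΔB) φ) = ΔA ((star ΔB) φ) from rfl]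
    congr 1
    · rw [← ContinuousLinearMap.adjoint_inner_left, ← ContinuousLinearMap.star_eq_adjoint]
    · rw [ContinuousLinearMap.star_eq_adjoint, ContinuousLinearMap.adjoint_inner_right]
  have hAeq := norm_star_apply_of_normal _ hΔAnorm φ
  have hBeq := norm_star_apply_of_normal _ hΔBnorm φ
  have habs : ‖c‖ ≤ 2 * (‖ΔA φ‖ * ‖ΔB φ‖) := by
    calc ‖c‖ = ‖⟪(star ΔA) φ, (star ΔB) φ⟫_ℂ - ⟪ΔB φ, ΔA φ⟫_ℂ‖ := by
          rw [← key]
      _ ≤ ‖⟪(star ΔA) φ, (star ΔB) φ⟫_ℂ‖ + ‖⟪ΔB φ, ΔA φ⟫_ℂ‖ := norm_sub_le _ _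
      _ ≤ ‖(star ΔA) φ‖ * ‖(star ΔB) φ‖ + ‖ΔB φ‖ * ‖ΔA φ‖ := by
          gcongr <;> exact norm_inner_le_norm _ _
      _ = 2 * (‖ΔA φ‖ * ‖ΔB φ‖) := by rw [hAeq, hBeq]; ring
  have h0 : (0:ℝ) ≤ ‖c‖ := norm_nonneg c
  nlinarith [habs, h0, norm_nonneg (ΔA φ), norm_nonneg (ΔB φ)]
end

section
/- Let γ, Ω be real with 0 < γ/2 < Ω, set ω := √(Ω² − γ²/4), let v ∈ ℝ, and define h(t) := (v²Ω/(2ω))·e^{−γt/2}·sin(ωt) for t ≥ 0. Then for every s ≥ 0, ∫₀^∞ 4·h(u)·h(s+u) du = (v⁴/(4γω))·e^{−γs/2}·(2ω·cos(ωs) + γ·sin(ωs)). Equivalently, with τ := (ω − iγ/2)/Ω, this equals (v⁴Ω/(4γω))·(τ·e^{(iω−γ/2)s} + conj(τ)·e^{(−iω−γ/2)s}). -/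
set_option maxHeartbeats 1000000 in
open Real MeasureTheory Set Filter in
/-- Autocorrelation of the radiation-pressure response function
`h(t) = (v²Ω/(2ω))e^{−γt/2}sin(ωt)`:
`∫₀^∞ 4h(u)h(s+u)du = (v⁴/(4γω))e^{−γs/2}(2ω cos(ωs) + γ sin(ωs))`, which equals
`(v⁴Ω/(4γω))(τe^{(iω−γ/2)s} + conj(τ)e^{(−iω−γ/2)s})` with `τ = (ω − iγ/2)/Ω`. -/
theorem response_function_autocorrelation
    (γ Ω : ℝ) (hγ : 0 < γ) (hΩ : γ / 2 < Ω)
    (ω : ℝ) (hω : ω = Real.sqrt (Ω ^ 2 - γ ^ 2 / 4))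
    (v : ℝ) (h : ℝ → ℝ)
    (hh : ∀ t, h t = (v ^ 2 * Ω / (2 * ω)) * Real.exp (-γ * t / 2) * Real.sin (ω * t))
    (τ : ℂ) (hτ : τ = ((ω : ℂ) - Complex.I * (γ : ℂ) / 2) / (Ω : ℂ))
    (s : ℝ) (hs : 0 ≤ s) :
    (∫ u in Set.Ioi (0:ℝ), 4 * h u * h (s + u))
      = (v ^ 4 / (4 * γ * ω)) * Real.exp (-γ * s / 2) *
          (2 * ω * Real.cos (ω * s) + γ * Real.sin (ω * s)) ∧
    ((∫ u in Set.Ioi (0:ℝ), 4 * h u * h (s + u) : ℝ) : ℂ)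
      = ((v ^ 4 * Ω / (4 * γ * ω) : ℝ) : ℂ) *
          (τ * Complex.exp ((Complex.I * ω - γ / 2) * s)
            + (starRingEnd ℂ) τ * Complex.exp ((-Complex.I * ω - γ / 2) * s)) := by
  have hΩ0 : 0 < Ω := lt_trans (by linarith) hΩ
  have hsq : 0 < Ω ^ 2 - γ ^ 2 / 4 := by nlinarith
  have hω0 : 0 < ω := by rw [hω]; exact Real.sqrt_pos.2 hsq
  have hω2 : ω ^ 2 = Ω ^ 2 - γ ^ 2 / 4 := by rw [hω, Real.sq_sqrt hsq.le]
  have h4 : γ ^ 2 + 4 * ω ^ 2 = 4 * Ω ^ 2 := by rw [hω2]; ring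
  have hD : γ ^ 2 + 4 * ω ^ 2 ≠ 0 := by positivity
  set C : ℝ := v ^ 2 * Ω / (2 * ω) with hC
  set M : ℝ := 4 * C ^ 2 * Real.exp (-γ * s / 2) with hM
  have hfeq : ∀ u : ℝ, 4 * h u * h (s + u)
      = M * Real.exp (-(γ * u)) * (Real.sin (ω * u) * Real.sin (ω * s + ω * u)) := by
    intro u
    rw [hh, hh]
    have eexp : Real.exp (-γ * u / 2) * Real.exp (-γ * (s + u) / 2)
        = Real.exp (-γ * s / 2) * Real.exp (-(γ * u)) := by
      rw [← Real.exp_add, ← Real.exp_add]; ring_nf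
    have esin : ω * (s + u) = ω * s + ω * u := by ring
    rw [esin]
    calc 4 * (C * Real.exp (-γ * u / 2) * Real.sin (ω * u)) *
          (C * Real.exp (-γ * (s + u) / 2) * Real.sin (ω * s + ω * u))
        = 4 * C ^ 2 * (Real.exp (-γ * u / 2) * Real.exp (-γ * (s + u) / 2)) *
            (Real.sin (ω * u) * Real.sin (ω * s + ω * u)) := by ring
      _ = M * Real.exp (-(γ * u)) * (Real.sin (ω * u) * Real.sin (ω * s + ω * u)) := by
          rw [eexp, hM]; ring
  set F : ℝ → ℝ := fun u => -(M / 2) *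
      (Real.cos (ω * s) * Real.exp (-(γ * u)) / γ
        + Real.exp (-(γ * u)) * (-γ * Real.cos (ω * s + 2 * ω * u)
            + 2 * ω * Real.sin (ω * s + 2 * ω * u)) / (γ ^ 2 + 4 * ω ^ 2)) with hF
  have hderiv : ∀ u : ℝ, HasDerivAt F (4 * h u * h (s + u)) u := by
    intro u
    have hE : HasDerivAt (fun u : ℝ => Real.exp (-(γ * u))) (-γ * Real.exp (-(γ * u))) u := by
      have := (((hasDerivAt_id u).const_mul γ).neg).exp
      simpa [mul_comm] using this
    have h1 : HasDerivAt (fun u : ℝ => ω * s + 2 * ω * u) (2 * ω) u := by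
      simpa using ((hasDerivAt_id u).const_mul (2 * ω)).const_add (ω * s)
    have h2 := h1.cos
    have h3 := h1.sin
    have term1 := (hE.const_mul (Real.cos (ω * s))).div_const γ
    have inner := (h2.const_mul (-γ)).add (h3.const_mul (2 * ω))
    have term2 := (hE.mul inner).div_const (γ ^ 2 + 4 * ω ^ 2)
    have final := ((term1.add term2).const_mul (-(M / 2)))
    refine final.congr_deriv ?_
    symm
    rw [hfeq u]
    have c1 := Real.cos_sub (ω * s + ω * u) (ω * u)
    have c2 := Real.cos_add (ω * s + ω * u) (ω * u)
    have a1 : ω * s + ω * u - ω * u = ω * s := by ring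
    have a2 : ω * s + ω * u + ω * u = ω * s + 2 * ω * u := by ring
    rw [a1] at c1; rw [a2] at c2
    have key : Real.sin (ω * u) * Real.sin (ω * s + ω * u)
        = (Real.cos (ω * s) - Real.cos (ω * s + 2 * ω * u)) / 2 := by
      linear_combination (c2 - c1) / 2
    rw [key]
    simp only [Pi.add_apply]
    field_simp
    ring
  have hint : IntegrableOn (fun u => 4 * h u * h (s + u)) (Ioi (0:ℝ)) := by
    have hg : IntegrableOn (fun u : ℝ => |M| * Real.exp (-γ * u)) (Ioi (0:ℝ)) :=
      (exp_neg_integrableOn_Ioi 0 hγ).const_mul |M|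
    refine MeasureTheory.Integrable.mono hg ?_ ?_
    · apply Continuous.aestronglyMeasurable
      have hfun : h = fun t => C * Real.exp (-γ * t / 2) * Real.sin (ω * t) := funext hh
      have hcont : Continuous h := by rw [hfun]; fun_prop
      fun_prop
    · refine ae_of_all _ fun u => ?_
      rw [hfeq u]
      have h1 : |Real.sin (ω * u)| * |Real.sin (ω * s + ω * u)| ≤ 1 :=
        mul_le_one₀ (Real.abs_sin_le_one _) (abs_nonneg _) (Real.abs_sin_le_one _)
      simp only [Real.norm_eq_abs, abs_mul, Real.abs_exp, abs_abs, neg_mul]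
      exact mul_le_of_le_one_right (by positivity) h1
  have htend : Tendsto F atTop (nhds 0) := by
    have hexp : Tendsto (fun u : ℝ => Real.exp (-(γ * u))) atTop (nhds 0) := by
      have h1 : Tendsto (fun u : ℝ => γ * u) atTop atTop :=
        tendsto_id.const_mul_atTop hγ
      exact Real.tendsto_exp_neg_atTop_nhds_zero.comp h1
    have hbd : ∀ u : ℝ, ‖F u‖ ≤ (|M| / 2 * (1 / γ + (γ + 2 * ω) / (γ ^ 2 + 4 * ω ^ 2)))
        * Real.exp (-(γ * u)) := by
      intro u
      set cB := Real.cos (ω * s + 2 * ω * u) with hcB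
      set sB := Real.sin (ω * s + 2 * ω * u) with hsB
      have b1 : |Real.cos (ω * s)| ≤ 1 := Real.abs_cos_le_one _
      have b2 : |cB| ≤ 1 := Real.abs_cos_le_one _
      have b3 : |sB| ≤ 1 := Real.abs_sin_le_one _
      have he : (0:ℝ) < Real.exp (-(γ * u)) := Real.exp_pos _
      have hD0 : (0:ℝ) < γ ^ 2 + 4 * ω ^ 2 := by positivity
      have inner_bd : |Real.cos (ω * s) * Real.exp (-(γ * u)) / γ
          + Real.exp (-(γ * u)) * (-γ * cB + 2 * ω * sB) / (γ ^ 2 + 4 * ω ^ 2)|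
          ≤ (1 / γ + (γ + 2 * ω) / (γ ^ 2 + 4 * ω ^ 2)) * Real.exp (-(γ * u)) := by
        refine (abs_add_le _ _).trans ?_
        have i1 : |Real.cos (ω * s) * Real.exp (-(γ * u)) / γ|
            ≤ 1 / γ * Real.exp (-(γ * u)) := by
          rw [abs_div, abs_mul, Real.abs_exp, abs_of_pos hγ]
          calc |Real.cos (ω * s)| * Real.exp (-(γ * u)) / γ
              ≤ 1 * Real.exp (-(γ * u)) / γ := by gcongr
            _ = 1 / γ * Real.exp (-(γ * u)) := by ring
        have i2 : |Real.exp (-(γ * u)) * (-γ * cB + 2 * ω * sB) / (γ ^ 2 + 4 * ω ^ 2)|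
            ≤ (γ + 2 * ω) / (γ ^ 2 + 4 * ω ^ 2) * Real.exp (-(γ * u)) := by
          have hnum : |(-γ * cB + 2 * ω * sB)| ≤ γ + 2 * ω := by
            refine (abs_add_le _ _).trans ?_
            rw [abs_mul, abs_mul, abs_neg, abs_of_pos hγ,
              abs_of_pos (by positivity : (0:ℝ) < 2 * ω)]
            nlinarith
          rw [abs_div, abs_mul, Real.abs_exp, abs_of_pos hD0]
          calc Real.exp (-(γ * u)) * |(-γ * cB + 2 * ω * sB)| / (γ ^ 2 + 4 * ω ^ 2)
              ≤ Real.exp (-(γ * u)) * (γ + 2 * ω) / (γ ^ 2 + 4 * ω ^ 2) := by gcongr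
            _ = (γ + 2 * ω) / (γ ^ 2 + 4 * ω ^ 2) * Real.exp (-(γ * u)) := by ring
        linarith
      rw [Real.norm_eq_abs, hF]
      simp only [abs_mul, abs_neg, abs_div]
      calc |M| / |(2:ℝ)| * |Real.cos (ω * s) * Real.exp (-(γ * u)) / γ
            + Real.exp (-(γ * u)) * (-γ * cB + 2 * ω * sB) / (γ ^ 2 + 4 * ω ^ 2)|
          ≤ |M| / 2 * ((1 / γ + (γ + 2 * ω) / (γ ^ 2 + 4 * ω ^ 2)) * Real.exp (-(γ * u))) := by
            rw [abs_two]
            exact mul_le_mul_of_nonneg_left inner_bd (by positivity)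
        _ = (|M| / 2 * (1 / γ + (γ + 2 * ω) / (γ ^ 2 + 4 * ω ^ 2))) * Real.exp (-(γ * u)) := by
            ring
    exact squeeze_zero_norm hbd (by simpa using hexp.const_mul (|M| / 2 * (1 / γ + (γ + 2 * ω) / (γ ^ 2 + 4 * ω ^ 2))))
  have key := integral_Ioi_of_hasDerivAt_of_tendsto' (f := F)
    (fun x _ => hderiv x) hint htend
  have hF0 : F 0 = -(M / 2) * (Real.cos (ω * s) / γ
      + (-γ * Real.cos (ω * s) + 2 * ω * Real.sin (ω * s)) / (γ ^ 2 + 4 * ω ^ 2)) := by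
    simp [hF]
  have part1 : (∫ u in Set.Ioi (0:ℝ), 4 * h u * h (s + u))
      = (v ^ 4 / (4 * γ * ω)) * Real.exp (-γ * s / 2) *
          (2 * ω * Real.cos (ω * s) + γ * Real.sin (ω * s)) := by
    have hCsq : C ^ 2 = v ^ 4 * (γ ^ 2 + 4 * ω ^ 2) / (16 * ω ^ 2) := by
      rw [hC]
      field_simp
      linear_combination (-4 * v ^ 4) * h4
    rw [key, hF0, zero_sub, hM, hCsq]
    field_simp
    ring
  refine ⟨part1, ?_⟩
  rw [part1, hτ]
  have e1 : Complex.exp ((Complex.I * ω - γ / 2) * s)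
      = (Real.exp (-γ * s / 2) : ℂ) * (Real.cos (ω * s) + Real.sin (ω * s) * Complex.I) := by
    rw [show (Complex.I * (ω:ℂ) - (γ:ℂ) / 2) * (s:ℂ)
        = ((ω * s : ℝ) : ℂ) * Complex.I + ((-γ * s / 2 : ℝ) : ℂ) by push_cast; ring]
    rw [Complex.exp_add, Complex.exp_mul_I]
    push_cast
    ring
  have e2 : Complex.exp ((-Complex.I * ω - γ / 2) * s)
      = (Real.exp (-γ * s / 2) : ℂ) * (Real.cos (ω * s) - Real.sin (ω * s) * Complex.I) := by
    rw [show (-Complex.I * (ω:ℂ) - (γ:ℂ) / 2) * (s:ℂ)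
        = ((-(ω * s) : ℝ) : ℂ) * Complex.I + ((-γ * s / 2 : ℝ) : ℂ) by push_cast; ring]
    rw [Complex.exp_add, Complex.exp_mul_I, Complex.ofReal_neg, Complex.cos_neg,
      Complex.sin_neg, ← Complex.ofReal_cos, ← Complex.ofReal_sin, ← Complex.ofReal_exp]
    ring
  rw [e1, e2]
  have hconj : (starRingEnd ℂ) (((ω : ℂ) - Complex.I * (γ : ℂ) / 2) / (Ω : ℂ))
      = ((ω : ℂ) + Complex.I * (γ : ℂ) / 2) / (Ω : ℂ) := by
    simp [map_div₀, map_sub, map_mul, map_ofNat, Complex.conj_I, Complex.conj_ofReal]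
    ring
  rw [hconj]
  have hΩc : (Ω : ℂ) ≠ 0 := Complex.ofReal_ne_zero.2 hΩ0.ne'
  have hγc : (γ : ℂ) ≠ 0 := Complex.ofReal_ne_zero.2 hγ.ne'
  have hωc : (ω : ℂ) ≠ 0 := Complex.ofReal_ne_zero.2 hω0.ne'
  push_cast
  field_simp
  ring_nf
  rw [Complex.I_sq]
  ring
end

section
/- Let γ, Ω be real with 0 < γ/2 < Ω, set ω := √(Ω² − γ²/4), let v ∈ ℝ, and define h(t) := (v²Ω/(2ω))·e^{−γt/2}·sin(ωt) for t ≥ 0 and D(μ) := (γ²/4 + (μ+ω)²)·(γ²/4 + (μ−ω)²) for μ ∈ ℝ. Then for all α, μ ∈ ℝ, 2·Re ∫₀^∞ e^{iμt}·( e^{−iα}·2i·h(t) + e^{iα}·(−2i)·h(t) ) dt = 4·v²·Ω·(Ω² − μ²)·sin(α) / D(μ). (This is the linearized reduced spectrum Σ₀(μ), up to the prefactor η^{3/2}|λ|², in the regime of weak radiation-pressure interaction.) -/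
open MeasureTheory Set Filter Complex

lemma integrable_cexp_Ioi {c : ℂ} (hc : c.re < 0) :
    IntegrableOn (fun t : ℝ => Complex.exp (c * t)) (Set.Ioi 0) := by
  have h1 : IntegrableOn (fun t : ℝ => Real.exp (-(-c.re) * t)) (Set.Ioi 0) :=
    exp_neg_integrableOn_Ioi 0 (by linarith)
  refine h1.mono' ?_ ?_
  · exact (Complex.continuous_exp.comp
      (continuous_const.mul Complex.continuous_ofReal)).aestronglyMeasurable
  · filter_upwards with t
    simp [Complex.norm_exp]

lemma integral_cexp_Ioi {c : ℂ} (hc : c.re < 0) :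
    ∫ t in Set.Ioi (0:ℝ), Complex.exp (c * t) = -1 / c := by
  have hc0 : c ≠ 0 := by intro h; rw [h] at hc; simp at hc
  have hd : ∀ x ∈ Set.Ici (0:ℝ),
      HasDerivAt (fun t : ℝ => Complex.exp (c * t) / c) (Complex.exp (c * x)) x := by
    intro x _
    have h1 : HasDerivAt (fun t : ℝ => c * (t : ℂ)) c x := by
      simpa using (Complex.ofRealCLM.hasDerivAt (x := x)).const_mul c
    have h2 := (Complex.hasDerivAt_exp (c * x)).comp x h1
    have h3 := h2.div_const c
    simpa [Function.comp, mul_div_assoc, div_self hc0] using h3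
  have htend : Tendsto (fun t : ℝ => Complex.exp (c * t) / c) atTop (nhds 0) := by
    rw [tendsto_zero_iff_norm_tendsto_zero]
    have heq : (fun t : ℝ => ‖Complex.exp (c * t) / c‖)
        = fun t : ℝ => Real.exp (c.re * t) / ‖c‖ := by
      funext t; simp [Complex.norm_exp]
    rw [heq]
    have h4 : Tendsto (fun t : ℝ => Real.exp (c.re * t)) atTop (nhds 0) :=
      Real.tendsto_exp_atBot.comp (tendsto_id.const_mul_atTop_of_neg hc)
    simpa using h4.div_const ‖c‖
  have := integral_Ioi_of_hasDerivAt_of_tendsto' hd (integrable_cexp_Ioi hc) htend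
  rw [this]; rw [neg_div, one_div]; simp



/-- Linearized reduced spectrum `Σ₀(μ)` (up to the prefactor `η^{3/2}|λ|²`):
`2 Re ∫₀^∞ e^{iμt}(e^{−iα}·2ih(t) + e^{iα}·(−2i)h(t)) dt = 4v²Ω(Ω² − μ²) sin α / D(μ)`. -/
theorem linearized_sigma_zero_spectrum
    (γ Ω : ℝ) (hγ : 0 < γ) (hΩ : γ / 2 < Ω)
    (ω : ℝ) (hω : ω = Real.sqrt (Ω ^ 2 - γ ^ 2 / 4))
    (v : ℝ) (h : ℝ → ℝ)
    (hh : ∀ t, h t = (v ^ 2 * Ω / (2 * ω)) * Real.exp (-γ * t / 2) * Real.sin (ω * t))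
    (D : ℝ → ℝ) (hD : ∀ x, D x = (γ ^ 2 / 4 + (x + ω) ^ 2) * (γ ^ 2 / 4 + (x - ω) ^ 2))
    (α μ : ℝ) :
    2 * (∫ t in Set.Ioi (0:ℝ), Complex.exp (Complex.I * μ * t) *
          (Complex.exp (-Complex.I * α) * (2 * Complex.I) * (h t : ℂ)
            + Complex.exp (Complex.I * α) * (-2 * Complex.I) * (h t : ℂ))).re
      = 4 * v ^ 2 * Ω * (Ω ^ 2 - μ ^ 2) * Real.sin α / D μ := by
  have hΩpos : 0 < Ω := lt_trans (half_pos hγ) hΩ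
  have hsq : γ ^ 2 / 4 < Ω ^ 2 := by nlinarith
  have hω2 : ω ^ 2 = Ω ^ 2 - γ ^ 2 / 4 := by
    rw [hω, Real.sq_sqrt (by linarith)]
  have hωpos : 0 < ω := by
    rw [hω]; exact Real.sqrt_pos.mpr (by linarith)
  -- constants
  set C : ℝ := v ^ 2 * Ω / (2 * ω) with hC
  set s : ℝ := Real.sin α with hs
  set c₁ : ℂ := ((-γ / 2 : ℝ) : ℂ) + ((μ + ω : ℝ) : ℂ) * Complex.I with hc₁def
  set c₂ : ℂ := ((-γ / 2 : ℝ) : ℂ) + ((μ - ω : ℝ) : ℂ) * Complex.I with hc₂def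
  set K₁ : ℂ := -2 * (s : ℂ) * (C : ℂ) * Complex.I with hK₁def
  set K₂ : ℂ := 2 * (s : ℂ) * (C : ℂ) * Complex.I with hK₂def
  have hc₁re : c₁.re < 0 := by simp [hc₁def]; linarith
  have hc₂re : c₂.re < 0 := by simp [hc₂def]; linarith
  -- pointwise identity
  have key : ∀ t : ℝ,
      Complex.exp (Complex.I * μ * t) *
          (Complex.exp (-Complex.I * α) * (2 * Complex.I) * (h t : ℂ)
            + Complex.exp (Complex.I * α) * (-2 * Complex.I) * (h t : ℂ))
        = K₁ * Complex.exp (c₁ * t) + K₂ * Complex.exp (c₂ * t) := by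
    intro t
    have hsin : ((Real.sin (ω * t) : ℝ) : ℂ)
        = ((Complex.exp (-(((ω * t : ℝ) : ℂ)) * Complex.I)
            - Complex.exp (((ω * t : ℝ) : ℂ) * Complex.I)) * Complex.I) / 2 := by
      rw [Complex.ofReal_sin]; rfl
    have e1 : Complex.exp (-Complex.I * (α : ℂ))
        = ((Real.cos α : ℝ) : ℂ) - ((s : ℝ) : ℂ) * Complex.I := by
      rw [show -Complex.I * (α : ℂ) = ((-α : ℝ) : ℂ) * Complex.I by push_cast; ring,
        Complex.exp_mul_I, ← Complex.ofReal_cos, ← Complex.ofReal_sin]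
      push_cast [Real.cos_neg, Real.sin_neg]; rw [hs]; push_cast; ring
    have e2 : Complex.exp (Complex.I * (α : ℂ))
        = ((Real.cos α : ℝ) : ℂ) + ((s : ℝ) : ℂ) * Complex.I := by
      rw [show Complex.I * (α : ℂ) = ((α : ℝ) : ℂ) * Complex.I by ring,
        Complex.exp_mul_I, ← Complex.ofReal_cos, ← Complex.ofReal_sin, hs]
    have f1 : Complex.exp (c₁ * t)
        = Complex.exp (Complex.I * μ * t) * Complex.exp (((-γ * t / 2 : ℝ) : ℂ))
            * Complex.exp (((ω * t : ℝ) : ℂ) * Complex.I) := by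
      rw [← Complex.exp_add, ← Complex.exp_add]; congr 1
      rw [hc₁def]; push_cast; ring
    have f2 : Complex.exp (c₂ * t)
        = Complex.exp (Complex.I * μ * t) * Complex.exp (((-γ * t / 2 : ℝ) : ℂ))
            * Complex.exp (-(((ω * t : ℝ) : ℂ)) * Complex.I) := by
      rw [← Complex.exp_add, ← Complex.exp_add]; congr 1
      rw [hc₂def]; push_cast; ring
    rw [hh t, Complex.ofReal_mul, Complex.ofReal_mul, Complex.ofReal_exp, hsin, f1, f2,
      e1, e2, hK₁def, hK₂def]
    linear_combination (-2 * (s : ℂ) * (C : ℂ) * Complex.exp (Complex.I * μ * t)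
      * Complex.exp (((-γ * t / 2 : ℝ) : ℂ))
      * (Complex.exp (-(((ω * t : ℝ) : ℂ)) * Complex.I)
        - Complex.exp (((ω * t : ℝ) : ℂ) * Complex.I)) * Complex.I) * Complex.I_sq
  -- integrate
  have hint1 : IntegrableOn (fun t : ℝ => K₁ * Complex.exp (c₁ * t)) (Set.Ioi 0) :=
    (integrable_cexp_Ioi hc₁re).const_mul K₁
  have hint2 : IntegrableOn (fun t : ℝ => K₂ * Complex.exp (c₂ * t)) (Set.Ioi 0) :=
    (integrable_cexp_Ioi hc₂re).const_mul K₂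
  simp only [key]
  rw [MeasureTheory.integral_add hint1 hint2, MeasureTheory.integral_const_mul,
    MeasureTheory.integral_const_mul, integral_cexp_Ioi hc₁re, integral_cexp_Ioi hc₂re]
  -- now a real computation
  have hs₁ : (0:ℝ) < γ ^ 2 / 4 + (μ + ω) ^ 2 := by positivity
  have hs₂ : (0:ℝ) < γ ^ 2 / 4 + (μ - ω) ^ 2 := by positivity
  rw [hD μ]
  have him₁ : (-1 / c₁).im = (μ + ω) / (γ ^ 2 / 4 + (μ + ω) ^ 2) := by
    rw [neg_div, one_div, Complex.neg_im, Complex.inv_im, hc₁def]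
    simp [Complex.normSq_apply]
    ring_nf
  have him₂ : (-1 / c₂).im = (μ - ω) / (γ ^ 2 / 4 + (μ - ω) ^ 2) := by
    rw [neg_div, one_div, Complex.neg_im, Complex.inv_im, hc₂def]
    simp [Complex.normSq_apply]
    ring_nf
  have hA : (K₁ * (-1 / c₁)).re = 2 * s * C * ((μ + ω) / (γ ^ 2 / 4 + (μ + ω) ^ 2)) := by
    rw [hK₁def, Complex.mul_re]
    simp [Complex.mul_re, Complex.mul_im, him₁]
    try ring
  have hB : (K₂ * (-1 / c₂)).re = -(2 * s * C * ((μ - ω) / (γ ^ 2 / 4 + (μ - ω) ^ 2))) := by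
    rw [hK₂def, Complex.mul_re]
    simp [Complex.mul_re, Complex.mul_im, him₂]
    try ring
  have hΩ2 : Ω ^ 2 = ω ^ 2 + γ ^ 2 / 4 := by linarith
  rw [Complex.add_re, hA, hB, hΩ2, hC, hs]
  field_simp
  ring
end

section
/- Let γ, Ω be real with 0 < γ/2 < Ω, set ω := √(Ω² − γ²/4), let v ∈ ℝ, c ≥ 0, N ≥ 0, and define g(s) := (v²Ω/(2ω))·(2N+1)·e^{−γs/2}·cos(ωs), r(s) := (1/Ω)·e^{−γs/2}·(ω·cos(ωs) + (γ/2)·sin(ωs)), A := c·v⁴·Ω/(4γω), and D(μ) := (γ²/4 + (μ+ω)²)·(γ²/4 + (μ−ω)²). Then for every μ ∈ ℝ, 2c·∫₀^∞ cos(μs)·( 2·g(s) + 4·A·r(s) ) ds = c·v²·Ω·( (γ/ω)·(2N+1)·(Ω² + μ²) + 2·c·v²·Ω ) / D(μ). (This is the linearized reduced spectrum Σ⁰₋(μ) in the regime of weak radiation-pressure interaction and flat phonon noise spectrum, with c = η|λ|² and N = N(ω).) -/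
open Real MeasureTheory Set Filter Topology

lemma intOn_exp_mul {f : ℝ → ℝ} (hf : Continuous f) (hb : ∀ x, |f x| ≤ 1)
    {k : ℝ} (hk : 0 < k) :
    IntegrableOn (fun s : ℝ => Real.exp (-k * s) * f s) (Set.Ioi 0) := by
  refine (exp_neg_integrableOn_Ioi 0 hk).mono' ?_ ?_
  · exact ((Real.continuous_exp.comp (continuous_const.mul continuous_id)).mul hf).aestronglyMeasurable
  · filter_upwards with s
    rw [norm_mul, Real.norm_eq_abs, Real.norm_eq_abs, Real.abs_exp]
    exact mul_le_of_le_one_right (Real.exp_pos _).le (hb s)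

lemma intOn_exp_cos {k : ℝ} (hk : 0 < k) (b : ℝ) :
    IntegrableOn (fun s : ℝ => Real.exp (-k * s) * Real.cos (b * s)) (Set.Ioi 0) :=
  intOn_exp_mul (Real.continuous_cos.comp (continuous_const.mul continuous_id))
    (fun _ => Real.abs_cos_le_one _) hk

lemma intOn_exp_sin {k : ℝ} (hk : 0 < k) (b : ℝ) :
    IntegrableOn (fun s : ℝ => Real.exp (-k * s) * Real.sin (b * s)) (Set.Ioi 0) :=
  intOn_exp_mul (Real.continuous_sin.comp (continuous_const.mul continuous_id))
    (fun _ => Real.abs_sin_le_one _) hk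

lemma tendsto_exp_neg_mul_bounded {k C : ℝ} (hk : 0 < k) {F : ℝ → ℝ}
    (hbound : ∀ s, |F s| ≤ C * Real.exp (-k * s)) : Tendsto F atTop (𝓝 0) := by
  have h1 : Tendsto (fun s : ℝ => C * Real.exp (-k * s)) atTop (𝓝 0) := by
    have : Tendsto (fun s : ℝ => Real.exp (-k * s)) atTop (𝓝 0) :=
      Real.tendsto_exp_atBot.comp (tendsto_id.const_mul_atTop_of_neg (neg_neg_iff_pos.2 hk))
    simpa using this.const_mul C
  exact squeeze_zero_norm (fun s => hbound s) h1

lemma integral_exp_cos_Ioi {k : ℝ} (hk : 0 < k) (b : ℝ) :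
    ∫ s in Set.Ioi (0:ℝ), Real.exp (-k * s) * Real.cos (b * s) = k / (k ^ 2 + b ^ 2) := by
  have hden : (0:ℝ) < k ^ 2 + b ^ 2 := by positivity
  set F : ℝ → ℝ := fun s =>
    Real.exp (-k * s) * (b * Real.sin (b * s) - k * Real.cos (b * s)) / (k ^ 2 + b ^ 2) with hF
  have hderiv : ∀ s : ℝ, HasDerivAt F (Real.exp (-k * s) * Real.cos (b * s)) s := by
    intro s
    have hexp : HasDerivAt (fun s : ℝ => Real.exp (-k * s)) (Real.exp (-k * s) * (-k)) s :=
      by simpa only [id_eq, mul_one] using ((hasDerivAt_id s).const_mul (-k)).exp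
    have hsin : HasDerivAt (fun s : ℝ => Real.sin (b * s)) (Real.cos (b * s) * b) s :=
      by simpa only [id_eq, mul_one] using ((hasDerivAt_id s).const_mul b).sin
    have hcos : HasDerivAt (fun s : ℝ => Real.cos (b * s)) (-Real.sin (b * s) * b) s :=
      by simpa only [id_eq, mul_one] using ((hasDerivAt_id s).const_mul b).cos
    have := (hexp.mul ((hsin.const_mul b).sub (hcos.const_mul k))).div_const (k ^ 2 + b ^ 2)
    convert this using 1
    rfl
    rfl
    rfl
    rw [eq_div_iff hden.ne', Pi.sub_apply]
    ring
  have htend : Tendsto F atTop (𝓝 0) := by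
    refine tendsto_exp_neg_mul_bounded (C := (|b| + k) / (k ^ 2 + b ^ 2)) hk (fun s => ?_)
    rw [hF]
    simp only [abs_div, abs_mul, Real.abs_exp, abs_of_pos hden]
    have h2 : |b * Real.sin (b * s) - k * Real.cos (b * s)| ≤ |b| + k := by
      calc |b * Real.sin (b * s) - k * Real.cos (b * s)|
          ≤ |b * Real.sin (b * s)| + |k * Real.cos (b * s)| := abs_sub _ _
        _ ≤ |b| * 1 + |k| * 1 := by
            rw [abs_mul, abs_mul]
            gcongr
            · exact Real.abs_sin_le_one _
            · exact Real.abs_cos_le_one _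
        _ = |b| + k := by rw [abs_of_pos hk]; ring
    calc Real.exp (-k * s) * |b * Real.sin (b * s) - k * Real.cos (b * s)| / (k ^ 2 + b ^ 2)
        ≤ Real.exp (-k * s) * (|b| + k) / (k ^ 2 + b ^ 2) := by
          gcongr
      _ = (|b| + k) / (k ^ 2 + b ^ 2) * Real.exp (-k * s) := by ring
  have key := integral_Ioi_of_hasDerivAt_of_tendsto
    (f := F) (f' := fun s => Real.exp (-k * s) * Real.cos (b * s)) (a := 0) (m := 0)
    (hderiv 0).continuousAt.continuousWithinAt
    (fun x _ => hderiv x) (intOn_exp_cos hk b) htend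
  rw [key, hF]
  simp
  field_simp

lemma integral_exp_sin_Ioi {k : ℝ} (hk : 0 < k) (b : ℝ) :
    ∫ s in Set.Ioi (0:ℝ), Real.exp (-k * s) * Real.sin (b * s) = b / (k ^ 2 + b ^ 2) := by
  have hden : (0:ℝ) < k ^ 2 + b ^ 2 := by positivity
  set F : ℝ → ℝ := fun s =>
    -(Real.exp (-k * s) * (k * Real.sin (b * s) + b * Real.cos (b * s))) / (k ^ 2 + b ^ 2) with hF
  have hderiv : ∀ s : ℝ, HasDerivAt F (Real.exp (-k * s) * Real.sin (b * s)) s := by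
    intro s
    have hexp : HasDerivAt (fun s : ℝ => Real.exp (-k * s)) (Real.exp (-k * s) * (-k)) s :=
      by simpa only [id_eq, mul_one] using ((hasDerivAt_id s).const_mul (-k)).exp
    have hsin : HasDerivAt (fun s : ℝ => Real.sin (b * s)) (Real.cos (b * s) * b) s :=
      by simpa only [id_eq, mul_one] using ((hasDerivAt_id s).const_mul b).sin
    have hcos : HasDerivAt (fun s : ℝ => Real.cos (b * s)) (-Real.sin (b * s) * b) s :=
      by simpa only [id_eq, mul_one] using ((hasDerivAt_id s).const_mul b).cos
    have := ((hexp.mul ((hsin.const_mul k).add (hcos.const_mul b))).neg).div_const (k ^ 2 + b ^ 2)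
    convert this using 1
    rfl
    rfl
    rfl
    rw [eq_div_iff hden.ne', Pi.add_apply]
    ring
  have htend : Tendsto F atTop (𝓝 0) := by
    refine tendsto_exp_neg_mul_bounded (C := (k + |b|) / (k ^ 2 + b ^ 2)) hk (fun s => ?_)
    rw [hF]
    simp only [abs_div, abs_neg, abs_mul, Real.abs_exp, abs_of_pos hden]
    have h2 : |k * Real.sin (b * s) + b * Real.cos (b * s)| ≤ k + |b| := by
      calc |k * Real.sin (b * s) + b * Real.cos (b * s)|
          ≤ |k * Real.sin (b * s)| + |b * Real.cos (b * s)| := abs_add_le _ _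
        _ ≤ |k| * 1 + |b| * 1 := by
            rw [abs_mul, abs_mul]
            gcongr
            · exact Real.abs_sin_le_one _
            · exact Real.abs_cos_le_one _
        _ = k + |b| := by rw [abs_of_pos hk]; ring
    calc Real.exp (-k * s) * |k * Real.sin (b * s) + b * Real.cos (b * s)| / (k ^ 2 + b ^ 2)
        ≤ Real.exp (-k * s) * (k + |b|) / (k ^ 2 + b ^ 2) := by
          gcongr
      _ = (k + |b|) / (k ^ 2 + b ^ 2) * Real.exp (-k * s) := by ring
  have key := integral_Ioi_of_hasDerivAt_of_tendsto
    (f := F) (f' := fun s => Real.exp (-k * s) * Real.sin (b * s)) (a := 0) (m := 0)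
    (hderiv 0).continuousAt.continuousWithinAt
    (fun x _ => hderiv x) (intOn_exp_sin hk b) htend
  rw [key, hF]
  simp
  field_simp

/-- Linearized phase-independent reduced spectrum `Σ⁰₋(μ)` in the flat-noise regime:
`2c∫₀^∞ cos(μs)(2g(s) + 4Ar(s)) ds = cv²Ω((γ/ω)(2N+1)(Ω² + μ²) + 2cv²Ω)/D(μ)`. -/
theorem linearized_sigma_minus_zero_spectrum
    (γ Ω : ℝ) (hγ : 0 < γ) (hΩ : γ / 2 < Ω)
    (ω : ℝ) (hω : ω = Real.sqrt (Ω ^ 2 - γ ^ 2 / 4))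
    (v c N : ℝ) (hc : 0 ≤ c) (hN : 0 ≤ N)
    (g r : ℝ → ℝ) (A : ℝ)
    (hg : ∀ s, g s = (v ^ 2 * Ω / (2 * ω)) * (2 * N + 1) * Real.exp (-γ * s / 2) * Real.cos (ω * s))
    (hr : ∀ s, r s = (1 / Ω) * Real.exp (-γ * s / 2) *
      (ω * Real.cos (ω * s) + (γ / 2) * Real.sin (ω * s)))
    (hA : A = c * v ^ 4 * Ω / (4 * γ * ω))
    (D : ℝ → ℝ) (hD : ∀ x, D x = (γ ^ 2 / 4 + (x + ω) ^ 2) * (γ ^ 2 / 4 + (x - ω) ^ 2))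
    (μ : ℝ) :
    2 * c * (∫ s in Set.Ioi (0:ℝ), Real.cos (μ * s) * (2 * g s + 4 * A * r s))
      = c * v ^ 2 * Ω * ((γ / ω) * (2 * N + 1) * (Ω ^ 2 + μ ^ 2) + 2 * c * v ^ 2 * Ω) / D μ := by
  have hk : 0 < γ / 2 := by linarith
  have hΩpos : 0 < Ω := lt_trans hk hΩ
  have hsq : 0 < Ω ^ 2 - γ ^ 2 / 4 := by nlinarith
  have hωpos : 0 < ω := by rw [hω]; exact Real.sqrt_pos.mpr hsq
  have hΩ2 : Ω ^ 2 = ω ^ 2 + γ ^ 2 / 4 := by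
    rw [hω, Real.sq_sqrt hsq.le]; ring
  set a1 : ℝ := v ^ 2 * Ω / (2 * ω) * (2 * N + 1) + 2 * A * ω / Ω with ha1
  set a3 : ℝ := A * γ / Ω with ha3
  have hfun : ∀ s : ℝ, Real.cos (μ * s) * (2 * g s + 4 * A * r s)
      = a1 * (Real.exp (-(γ / 2) * s) * Real.cos ((μ + ω) * s))
        + a1 * (Real.exp (-(γ / 2) * s) * Real.cos ((μ - ω) * s))
        + a3 * (Real.exp (-(γ / 2) * s) * Real.sin ((ω + μ) * s))
        + a3 * (Real.exp (-(γ / 2) * s) * Real.sin ((ω - μ) * s)) := by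
    intro s
    have e1 : -γ * s / 2 = -(γ / 2) * s := by ring
    rw [hg s, hr s, e1, ha1, ha3, add_mul μ ω, sub_mul μ ω, add_mul ω μ, sub_mul ω μ,
      Real.cos_add, Real.cos_sub, Real.sin_add, Real.sin_sub]
    ring
  have J1 := (intOn_exp_cos hk (μ + ω)).const_mul a1
  have J2 := (intOn_exp_cos hk (μ - ω)).const_mul a1
  have J3 := (intOn_exp_sin hk (ω + μ)).const_mul a3
  have J4 := (intOn_exp_sin hk (ω - μ)).const_mul a3
  have hi : (∫ s in Set.Ioi (0:ℝ), Real.cos (μ * s) * (2 * g s + 4 * A * r s))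
      = a1 * ((γ / 2) / ((γ / 2) ^ 2 + (μ + ω) ^ 2))
        + a1 * ((γ / 2) / ((γ / 2) ^ 2 + (μ - ω) ^ 2))
        + a3 * ((ω + μ) / ((γ / 2) ^ 2 + (ω + μ) ^ 2))
        + a3 * ((ω - μ) / ((γ / 2) ^ 2 + (ω - μ) ^ 2)) := by
    have K2 : Integrable (fun s : ℝ => a1 * (Real.exp (-(γ / 2) * s) * Real.cos ((μ + ω) * s))
        + a1 * (Real.exp (-(γ / 2) * s) * Real.cos ((μ - ω) * s))) (volume.restrict (Set.Ioi 0)) :=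
      J1.add J2
    have K3 : Integrable (fun s : ℝ => a1 * (Real.exp (-(γ / 2) * s) * Real.cos ((μ + ω) * s))
        + a1 * (Real.exp (-(γ / 2) * s) * Real.cos ((μ - ω) * s))
        + a3 * (Real.exp (-(γ / 2) * s) * Real.sin ((ω + μ) * s))) (volume.restrict (Set.Ioi 0)) :=
      K2.add J3
    rw [MeasureTheory.integral_congr_ae (Filter.Eventually.of_forall hfun)]
    rw [MeasureTheory.integral_add K3 J4,
      MeasureTheory.integral_add K2 J3,
      MeasureTheory.integral_add J1 J2,
      MeasureTheory.integral_const_mul, MeasureTheory.integral_const_mul,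
      MeasureTheory.integral_const_mul, MeasureTheory.integral_const_mul,
      integral_exp_cos_Ioi hk, integral_exp_cos_Ioi hk,
      integral_exp_sin_Ioi hk, integral_exp_sin_Ioi hk]
  rw [hi, hD, ha1, ha3, hA]
  have key : c * v ^ 2 * Ω * ((γ / ω) * (2 * N + 1) * (Ω ^ 2 + μ ^ 2) + 2 * c * v ^ 2 * Ω)
      = c * v ^ 2 * ((γ / ω) * (2 * N + 1) * Ω * (ω ^ 2 + γ ^ 2 / 4 + μ ^ 2)
          + 2 * c * v ^ 2 * (ω ^ 2 + γ ^ 2 / 4)) := by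
    linear_combination (c * v ^ 2 * (γ / ω) * (2 * N + 1) * Ω + 2 * c ^ 2 * v ^ 4) * hΩ2
  rw [key]
  have hd1 : γ ^ 2 / 4 + (μ + ω) ^ 2 ≠ 0 := by positivity
  have hd2 : γ ^ 2 / 4 + (μ - ω) ^ 2 ≠ 0 := by positivity
  field_simp
  ring
end

section
/- Let γ, Ω be real with 0 < γ/2 < Ω, set ω := √(Ω² − γ²/4), let v ∈ ℝ, c ≥ 0, N ≥ 0, and define h(s) := (v²Ω/(2ω))·e^{−γs/2}·sin(ωs), g(s) := (v²Ω/(2ω))·(2N+1)·e^{−γs/2}·cos(ωs), r(s) := (1/Ω)·e^{−γs/2}·(ω·cos(ωs) + (γ/2)·sin(ωs)), A := c·v⁴·Ω/(4γω), and D(μ) := (γ²/4 + (μ+ω)²)·(γ²/4 + (μ−ω)²). Then for all α, μ ∈ ℝ, 2c·Re ∫₀^∞ e^{iμs}·( e^{−2iα}·(−g(s) + i·h(s) − 2·A·r(s)) + e^{2iα}·(−g(s) − i·h(s) − 2·A·r(s)) ) ds = (c·v²·Ω/D(μ))·( 2·(Ω² − μ²)·sin(2α) − ( 2·c·v²·Ω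 + (γ/ω)·(2N+1)·(Ω² + μ²) )·cos(2α) ). (This is the linearized phase-dependent reduced spectrum Σ^ψ₋(μ) in the regime of weak radiation-pressure interaction and flat phonon noise spectrum.) -/
open MeasureTheory Set

lemma myIntegrableOn_cexp {z : ℂ} (hz : z.re < 0) :
    IntegrableOn (fun s : ℝ => Complex.exp (z * s)) (Ioi (0:ℝ)) := by
  have hcont : Continuous fun s : ℝ => Complex.exp (z * s) := by fun_prop
  refine (exp_neg_integrableOn_Ioi 0 (b := -z.re) (by linarith)).mono'
    hcont.aestronglyMeasurable.restrict ?_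
  filter_upwards with s
  rw [Complex.norm_exp]
  simp [Complex.mul_re]

lemma myIntegral_cexp {z : ℂ} (hz : z.re < 0) :
    ∫ s in Ioi (0:ℝ), Complex.exp (z * s) = -z⁻¹ := by
  have hz0 : z ≠ 0 := fun h => by simp [h] at hz
  have hderiv : ∀ s ∈ Ici (0:ℝ),
      HasDerivAt (fun s : ℝ => z⁻¹ * Complex.exp (z * s)) (Complex.exp (z * s)) s := by
    intro s _
    have h1 : HasDerivAt (fun s : ℝ => z * (s : ℂ)) z s := by
      simpa using (Complex.ofRealCLM.hasDerivAt (x := s)).const_mul z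
    have h2 := (h1.cexp).const_mul z⁻¹
    have : z⁻¹ * (Complex.exp (z * s) * z) = Complex.exp (z * s) := by
      field_simp
    simpa [this] using h2
  have htend : Filter.Tendsto (fun s : ℝ => z⁻¹ * Complex.exp (z * s))
      Filter.atTop (nhds 0) := by
    rw [tendsto_zero_iff_norm_tendsto_zero]
    have heq : (fun s : ℝ => ‖z⁻¹ * Complex.exp (z * s)‖)
        = fun s : ℝ => ‖z⁻¹‖ * Real.exp (-(-z.re * s)) := by
      ext s
      rw [norm_mul]; rw [Complex.norm_exp]
      simp [Complex.mul_re]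
    rw [heq]
    have ht : Filter.Tendsto (fun s : ℝ => -z.re * s) Filter.atTop Filter.atTop :=
      Filter.Tendsto.const_mul_atTop (by linarith) Filter.tendsto_id
    simpa using (Real.tendsto_exp_neg_atTop_nhds_zero.comp ht).const_mul ‖z⁻¹‖
  have := integral_Ioi_of_hasDerivAt_of_tendsto' hderiv (myIntegrableOn_cexp hz) htend
  simpa using this


set_option maxHeartbeats 2000000 in
/-- Linearized phase-dependent reduced spectrum `Σ^ψ₋(μ)` in the flat-noise regime:
`2c Re ∫₀^∞ e^{iμs}(e^{−2iα}(−g + ih − 2Ar) + e^{2iα}(−g − ih − 2Ar)) ds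
  = (cv²Ω/D(μ))(2(Ω² − μ²) sin 2α − (2cv²Ω + (γ/ω)(2N+1)(Ω² + μ²)) cos 2α)`. -/
theorem linearized_sigma_minus_psi_spectrum
    (γ Ω : ℝ) (hγ : 0 < γ) (hΩ : γ / 2 < Ω)
    (ω : ℝ) (hω : ω = Real.sqrt (Ω ^ 2 - γ ^ 2 / 4))
    (v c N : ℝ) (hc : 0 ≤ c) (hN : 0 ≤ N)
    (h g r : ℝ → ℝ) (A : ℝ)
    (hh : ∀ s, h s = (v ^ 2 * Ω / (2 * ω)) * Real.exp (-γ * s / 2) * Real.sin (ω * s))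
    (hg : ∀ s, g s = (v ^ 2 * Ω / (2 * ω)) * (2 * N + 1) * Real.exp (-γ * s / 2) * Real.cos (ω * s))
    (hr : ∀ s, r s = (1 / Ω) * Real.exp (-γ * s / 2) *
      (ω * Real.cos (ω * s) + (γ / 2) * Real.sin (ω * s)))
    (hA : A = c * v ^ 4 * Ω / (4 * γ * ω))
    (D : ℝ → ℝ) (hD : ∀ x, D x = (γ ^ 2 / 4 + (x + ω) ^ 2) * (γ ^ 2 / 4 + (x - ω) ^ 2))
    (α μ : ℝ) :
    2 * c * (∫ s in Set.Ioi (0:ℝ), Complex.exp (Complex.I * μ * s) *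
          (Complex.exp (-2 * Complex.I * α) *
              (-(g s : ℂ) + Complex.I * (h s : ℂ) - 2 * (A : ℂ) * (r s : ℂ))
            + Complex.exp (2 * Complex.I * α) *
              (-(g s : ℂ) - Complex.I * (h s : ℂ) - 2 * (A : ℂ) * (r s : ℂ)))).re
      = (c * v ^ 2 * Ω / D μ) *
          (2 * (Ω ^ 2 - μ ^ 2) * Real.sin (2 * α)
            - (2 * c * v ^ 2 * Ω + (γ / ω) * (2 * N + 1) * (Ω ^ 2 + μ ^ 2)) * Real.cos (2 * α)) := by
  have hΩ0 : 0 < Ω := lt_trans (by linarith) hΩ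
  have hsq : 0 < Ω ^ 2 - γ ^ 2 / 4 := by nlinarith
  have hω0 : 0 < ω := hω ▸ Real.sqrt_pos.mpr hsq
  have hω2 : ω ^ 2 = Ω ^ 2 - γ ^ 2 / 4 := hω ▸ Real.sq_sqrt hsq.le
  set G : ℝ := v ^ 2 * Ω / (2 * ω) with hG
  set Ph : ℝ := (-(G * (2 * N + 1)) - 2 * A * ω / Ω) / 2 with hPh
  set Qr : ℝ := -(A * γ / Ω) / 2 with hQr
  set Gh : ℝ := G / 2 with hGh
  set z₁ : ℂ := Complex.I * ((μ:ℂ) + ω) - (γ:ℂ) / 2 with hz₁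
  set z₂ : ℂ := Complex.I * ((μ:ℂ) - ω) - (γ:ℂ) / 2 with hz₂
  set K₁ : ℂ := Complex.exp (-2 * Complex.I * α) * ((Ph:ℂ) - Complex.I * ((Qr:ℂ) + (Gh:ℂ) * Complex.I))
      + Complex.exp (2 * Complex.I * α) * ((Ph:ℂ) - Complex.I * ((Qr:ℂ) - (Gh:ℂ) * Complex.I)) with hK₁
  set K₂ : ℂ := Complex.exp (-2 * Complex.I * α) * ((Ph:ℂ) + Complex.I * ((Qr:ℂ) + (Gh:ℂ) * Complex.I))
      + Complex.exp (2 * Complex.I * α) * ((Ph:ℂ) + Complex.I * ((Qr:ℂ) - (Gh:ℂ) * Complex.I)) with hK₂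
  have hz₁re : z₁.re < 0 := by simp [hz₁]; linarith
  have hz₂re : z₂.re < 0 := by simp [hz₂]; linarith
  have hpt : ∀ s : ℝ, Complex.exp (Complex.I * μ * s) *
          (Complex.exp (-2 * Complex.I * α) *
              (-(g s : ℂ) + Complex.I * (h s : ℂ) - 2 * (A : ℂ) * (r s : ℂ))
            + Complex.exp (2 * Complex.I * α) *
              (-(g s : ℂ) - Complex.I * (h s : ℂ) - 2 * (A : ℂ) * (r s : ℂ)))
      = K₁ * Complex.exp (z₁ * s) + K₂ * Complex.exp (z₂ * s) := by
    intro s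
    rw [hh s, hg s, hr s]
    push_cast
    have hcos : Complex.cos ((ω:ℂ) * s) = (Complex.exp ((ω:ℂ) * s * Complex.I) + Complex.exp (-((ω:ℂ) * s) * Complex.I)) / 2 := rfl
    have hsin : Complex.sin ((ω:ℂ) * s) = (Complex.exp (-((ω:ℂ) * s) * Complex.I) - Complex.exp ((ω:ℂ) * s * Complex.I)) * Complex.I / 2 := rfl
    have he1 : Complex.exp (z₁ * s) = Complex.exp (Complex.I * μ * s) * (Complex.exp (-(γ:ℂ) * s / 2) * Complex.exp ((ω:ℂ) * s * Complex.I)) := by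
      rw [← Complex.exp_add, ← Complex.exp_add, hz₁]; ring_nf
    have he2 : Complex.exp (z₂ * s) = Complex.exp (Complex.I * μ * s) * (Complex.exp (-(γ:ℂ) * s / 2) * Complex.exp (-((ω:ℂ) * s) * Complex.I)) := by
      rw [← Complex.exp_add, ← Complex.exp_add, hz₂]; ring_nf
    rw [hcos, hsin, he1, he2, hK₁, hK₂, hPh, hQr, hGh]
    push_cast
    ring
  have hz₁0 : z₁ ≠ 0 := fun h0 => by rw [h0] at hz₁re; simp at hz₁re
  have hz₂0 : z₂ ≠ 0 := fun h0 => by rw [h0] at hz₂re; simp at hz₂re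
  have hd₁ : (0:ℝ) < γ ^ 2 / 4 + (μ + ω) ^ 2 := by positivity
  have hd₂ : (0:ℝ) < γ ^ 2 / 4 + (μ - ω) ^ 2 := by positivity
  have hint : (∫ s in Set.Ioi (0:ℝ), Complex.exp (Complex.I * μ * s) *
          (Complex.exp (-2 * Complex.I * α) *
              (-(g s : ℂ) + Complex.I * (h s : ℂ) - 2 * (A : ℂ) * (r s : ℂ))
            + Complex.exp (2 * Complex.I * α) *
              (-(g s : ℂ) - Complex.I * (h s : ℂ) - 2 * (A : ℂ) * (r s : ℂ))))
      = K₁ * -z₁⁻¹ + K₂ * -z₂⁻¹ := by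
    rw [MeasureTheory.integral_congr_ae (Filter.Eventually.of_forall hpt)]
    rw [MeasureTheory.integral_add ((myIntegrableOn_cexp hz₁re).const_mul K₁)
      ((myIntegrableOn_cexp hz₂re).const_mul K₂),
      MeasureTheory.integral_const_mul, MeasureTheory.integral_const_mul,
      myIntegral_cexp hz₁re, myIntegral_cexp hz₂re]
  rw [hint]
  have hinv1 : -z₁⁻¹ = (((γ/2 : ℝ):ℂ) + Complex.I * ((μ:ℂ) + ω)) / ((γ ^ 2 / 4 + (μ + ω) ^ 2 : ℝ):ℂ) := by
    rw [eq_div_iff (by exact_mod_cast hd₁.ne')]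
    field_simp [hz₁0]
    rw [hz₁]; push_cast
    rw [Complex.ext_iff]
    constructor <;> simp [Complex.mul_re, Complex.mul_im, pow_two] <;> ring
  have hinv2 : -z₂⁻¹ = (((γ/2 : ℝ):ℂ) + Complex.I * ((μ:ℂ) - ω)) / ((γ ^ 2 / 4 + (μ - ω) ^ 2 : ℝ):ℂ) := by
    rw [eq_div_iff (by exact_mod_cast hd₂.ne')]
    field_simp [hz₂0]
    rw [hz₂]; push_cast
    rw [Complex.ext_iff]
    constructor <;> simp [Complex.mul_re, Complex.mul_im, pow_two] <;> ring
  rw [hinv1, hinv2, ← mul_div_assoc, ← mul_div_assoc]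
  simp only [Complex.add_re, Complex.div_ofReal_re, hK₁, hK₂, Complex.mul_re, Complex.mul_im,
    Complex.add_im, Complex.sub_re, Complex.sub_im, Complex.I_re, Complex.I_im,
    Complex.ofReal_re, Complex.ofReal_im, Complex.exp_re, Complex.exp_im,
    Complex.neg_re, Complex.neg_im, Complex.ofReal_mul, Complex.ofReal_neg,
    Complex.re_ofNat, Complex.im_ofNat, Real.exp_zero, mul_zero, zero_mul, mul_one, one_mul,
    sub_zero, zero_sub, add_zero, zero_add, neg_zero, neg_neg, neg_mul, Real.cos_neg, Real.sin_neg]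
  rw [hD μ, hPh, hQr, hGh, hG, hA]
  field_simp
  linear_combination ((-128)*c*v^2*γ^2*Ω*N*Real.cos (2*α) + (-128)*c^2*v^4*γ*ω*Real.cos (2*α) + (-64)*c*v^2*γ^2*Ω*Real.cos (2*α) + (128)*c*v^2*γ*Ω*ω*Real.sin (2*α)) * hω2
end

section
/- Let γ, Ω be real with 0 < γ/2 < Ω, set ω := √(Ω² − γ²/4), let v ∈ ℝ, c ≥ 0, N ≥ 0, and define h(s) := (v²Ω/(2ω))·e^{−γs/2}·sin(ωs), g(s) := (v²Ω/(2ω))·(2N+1)·e^{−γs/2}·cos(ωs), r(s) := (1/Ω)·e^{−γs/2}·(ω·cos(ωs) + (γ/2)·sin(ωs)), A := c·v⁴·Ω/(4γω), E(μ) := c·v²/Ω + (γ/(2ω))·(2N+1)·(1 + μ²/Ω²), and D(μ) := (γ²/4 + (μ+ω)²)·(γ²/4 + (μ−ω)²). Then for all α, μ ∈ ℝ, 2c·Re ∫₀^∞ e^{iμs}·( (g(s) + i·h(s) + 2·A·r(s)) + conj(g(s) + i·h(s) + 2·A·r(s)) + e^{−2iα}·(−g(s) + i·h(s) − 2·A·r(s))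 + e^{2iα}·(−g(s) − i·h(s) − 2·A·r(s)) ) ds = (2·c·v²·Ω³/D(μ))·( (1 − μ²/Ω²)·sin(2α) + E(μ)·(1 − cos(2α)) ). (This is the linearized total squeezing spectrum Σ₋(μ) = Σ⁰₋(μ) + Σ^ψ₋(μ) of the light reflected by the oscillating mirror, in the regime of weak radiation-pressure interaction and strong laser.) -/
open MeasureTheory Set Filter

lemma integrableOn_cexp_Ioi {w : ℂ} (hw : w.re < 0) :
    IntegrableOn (fun s : ℝ => Complex.exp (w * s)) (Set.Ioi 0) := by
  apply ((exp_neg_integrableOn_Ioi 0 (show (0:ℝ) < -w.re by linarith)).mono'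
    ((Complex.continuous_exp.comp (continuous_const.mul Complex.continuous_ofReal)).aestronglyMeasurable))
  filter_upwards with s
  simp [Complex.norm_exp, Complex.mul_re]

lemma integral_cexp_Ioi_s14 {w : ℂ} (hw : w.re < 0) :
    ∫ s in Set.Ioi (0:ℝ), Complex.exp (w * s) = -w⁻¹ := by
  have hw0 : w ≠ 0 := fun h => by simp [h] at hw
  have hderiv : ∀ x ∈ Set.Ici (0:ℝ),
      HasDerivAt (fun s : ℝ => w⁻¹ * Complex.exp (w * s)) (Complex.exp (w * x)) x := by
    intro x _
    have h1 : HasDerivAt (fun s : ℝ => w * (s : ℂ)) w x := by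
      simpa using (Complex.ofRealCLM.hasDerivAt (x := x)).const_mul w
    have h3 := h1.cexp.const_mul w⁻¹
    have h4 : w⁻¹ * (Complex.exp (w * x) * w) = Complex.exp (w * x) := by
      field_simp
    simpa [h4] using h3
  have htend : Tendsto (fun s : ℝ => w⁻¹ * Complex.exp (w * s)) atTop (nhds 0) := by
    rw [tendsto_zero_iff_norm_tendsto_zero]
    have h5 : (fun s : ℝ => ‖w⁻¹ * Complex.exp (w * s)‖)
        = fun s : ℝ => ‖w⁻¹‖ * Real.exp (w.re * s) := by
      funext s; simp [Complex.norm_exp, Complex.mul_re]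
    rw [h5]
    have h4 : Tendsto (fun s : ℝ => Real.exp (w.re * s)) atTop (nhds 0) :=
      Real.tendsto_exp_atBot.comp (tendsto_id.const_mul_atTop_of_neg hw)
    simpa using h4.const_mul ‖w⁻¹‖
  have := integral_Ioi_of_hasDerivAt_of_tendsto' hderiv (integrableOn_cexp_Ioi hw) htend
  rw [this]
  simp

set_option maxHeartbeats 2000000 in
/-- Linearized total squeezing spectrum `Σ₋(μ) = Σ⁰₋(μ) + Σ^ψ₋(μ)`:
`2c Re ∫₀^∞ e^{iμs}((g+ih+2Ar) + conj(g+ih+2Ar) + e^{−2iα}(−g+ih−2Ar) + e^{2iα}(−g−ih−2Ar)) ds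
  = (2cv²Ω³/D(μ))((1 − μ²/Ω²) sin 2α + E(μ)(1 − cos 2α))`. -/
theorem linearized_total_squeezing_spectrum
    (γ Ω : ℝ) (hγ : 0 < γ) (hΩ : γ / 2 < Ω)
    (ω : ℝ) (hω : ω = Real.sqrt (Ω ^ 2 - γ ^ 2 / 4))
    (v c N : ℝ) (hc : 0 ≤ c) (hN : 0 ≤ N)
    (h g r : ℝ → ℝ) (A : ℝ)
    (hh : ∀ s, h s = (v ^ 2 * Ω / (2 * ω)) * Real.exp (-γ * s / 2) * Real.sin (ω * s))
    (hg : ∀ s, g s = (v ^ 2 * Ω / (2 * ω)) * (2 * N + 1) * Real.exp (-γ * s / 2) * Real.cos (ω * s))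
    (hr : ∀ s, r s = (1 / Ω) * Real.exp (-γ * s / 2) *
      (ω * Real.cos (ω * s) + (γ / 2) * Real.sin (ω * s)))
    (hA : A = c * v ^ 4 * Ω / (4 * γ * ω))
    (E : ℝ → ℝ)
    (hE : ∀ x, E x = c * v ^ 2 / Ω + (γ / (2 * ω)) * (2 * N + 1) * (1 + x ^ 2 / Ω ^ 2))
    (D : ℝ → ℝ) (hD : ∀ x, D x = (γ ^ 2 / 4 + (x + ω) ^ 2) * (γ ^ 2 / 4 + (x - ω) ^ 2))
    (α μ : ℝ) :
    2 * c * (∫ s in Set.Ioi (0:ℝ), Complex.exp (Complex.I * μ * s) *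
          (((g s : ℂ) + Complex.I * (h s : ℂ) + 2 * (A : ℂ) * (r s : ℂ))
            + (starRingEnd ℂ) ((g s : ℂ) + Complex.I * (h s : ℂ) + 2 * (A : ℂ) * (r s : ℂ))
            + Complex.exp (-2 * Complex.I * α) *
                (-(g s : ℂ) + Complex.I * (h s : ℂ) - 2 * (A : ℂ) * (r s : ℂ))
            + Complex.exp (2 * Complex.I * α) *
                (-(g s : ℂ) - Complex.I * (h s : ℂ) - 2 * (A : ℂ) * (r s : ℂ)))).re
      = (2 * c * v ^ 2 * Ω ^ 3 / D μ) *
          ((1 - μ ^ 2 / Ω ^ 2) * Real.sin (2 * α) + E μ * (1 - Real.cos (2 * α))) := by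
  have hΩ0 : 0 < Ω := lt_trans (by linarith) hΩ
  have hsp : 0 < Ω ^ 2 - γ ^ 2 / 4 := by nlinarith
  have hω0 : 0 < ω := by rw [hω]; exact Real.sqrt_pos.mpr hsp
  have hsq' : Ω ^ 2 = ω ^ 2 + γ ^ 2 / 4 := by
    rw [hω, Real.sq_sqrt hsp.le]; ring
  set C := Real.cos (2 * α) with hCdef
  set S := Real.sin (2 * α) with hSdef
  set U1 : ℝ := (1 - C) * (v ^ 2 * Ω * (2 * N + 1) / (2 * ω) + c * v ^ 4 / (2 * γ)) with hU1
  set U2 : ℝ := -((1 - C) * (c * v ^ 4 / (4 * ω)) + S * (v ^ 2 * Ω / (2 * ω))) with hU2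
  set z1 : ℂ := Complex.I * ((μ + ω : ℝ) : ℂ) - ((γ / 2 : ℝ) : ℂ) with hz1
  set z2 : ℂ := Complex.I * ((μ - ω : ℝ) : ℂ) - ((γ / 2 : ℝ) : ℂ) with hz2
  set U : ℂ := (U1 : ℂ) + (U2 : ℂ) * Complex.I with hU
  set W : ℂ := (U1 : ℂ) - (U2 : ℂ) * Complex.I with hW
  have hz1re : z1.re < 0 := by
    simp [hz1, Complex.sub_re, Complex.mul_re]; linarith
  have hz2re : z2.re < 0 := by
    simp [hz2, Complex.sub_re, Complex.mul_re]; linarith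
  have key : ∀ s : ℝ, Complex.exp (Complex.I * μ * s) *
          (((g s : ℂ) + Complex.I * (h s : ℂ) + 2 * (A : ℂ) * (r s : ℂ))
            + (starRingEnd ℂ) ((g s : ℂ) + Complex.I * (h s : ℂ) + 2 * (A : ℂ) * (r s : ℂ))
            + Complex.exp (-2 * Complex.I * α) *
                (-(g s : ℂ) + Complex.I * (h s : ℂ) - 2 * (A : ℂ) * (r s : ℂ))
            + Complex.exp (2 * Complex.I * α) *
                (-(g s : ℂ) - Complex.I * (h s : ℂ) - 2 * (A : ℂ) * (r s : ℂ)))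
      = U * Complex.exp (z1 * s) + W * Complex.exp (z2 * s) := by
    intro s
    have hconj : (starRingEnd ℂ) ((g s : ℂ) + Complex.I * (h s : ℂ) + 2 * (A : ℂ) * (r s : ℂ))
        = (g s : ℂ) - Complex.I * (h s : ℂ) + 2 * (A : ℂ) * (r s : ℂ) := by
      simp [map_add, map_mul, map_ofNat, Complex.conj_ofReal, Complex.conj_I]
      ring
    have e3 : Complex.exp (z1 * (s : ℂ)) = Complex.exp (Complex.I * (μ : ℂ) * (s : ℂ))
        * Complex.exp (((-γ * s / 2 : ℝ)) : ℂ) * Complex.exp (((ω * s : ℝ) : ℂ) * Complex.I) := by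
      rw [← Complex.exp_add, ← Complex.exp_add, hz1]
      congr 1
      push_cast
      ring
    have e4 : Complex.exp (z2 * (s : ℂ)) = Complex.exp (Complex.I * (μ : ℂ) * (s : ℂ))
        * Complex.exp (((-γ * s / 2 : ℝ)) : ℂ) * Complex.exp (((-(ω * s) : ℝ) : ℂ) * Complex.I) := by
      rw [← Complex.exp_add, ← Complex.exp_add, hz2]
      congr 1
      push_cast
      ring
    have hXc : Complex.exp (((ω * s : ℝ) : ℂ) * Complex.I)
        = ((Real.cos (ω * s) : ℝ) : ℂ) + ((Real.sin (ω * s) : ℝ) : ℂ) * Complex.I := by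
      rw [Complex.exp_mul_I, Complex.ofReal_cos, Complex.ofReal_sin]
    have hXs : Complex.exp (((-(ω * s) : ℝ) : ℂ) * Complex.I)
        = ((Real.cos (ω * s) : ℝ) : ℂ) - ((Real.sin (ω * s) : ℝ) : ℂ) * Complex.I := by
      rw [Complex.exp_mul_I, Complex.ofReal_cos, Complex.ofReal_sin, Complex.ofReal_neg,
        Complex.cos_neg, Complex.sin_neg]
      ring
    have hT : Complex.exp (2 * Complex.I * (α : ℂ)) = ((C : ℝ) : ℂ) + ((S : ℝ) : ℂ) * Complex.I := by
      rw [show (2 * Complex.I * (α : ℂ)) = ((2 * α : ℝ) : ℂ) * Complex.I by push_cast; ring,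
        Complex.exp_mul_I, Complex.ofReal_cos, Complex.ofReal_sin]
    have hT' : Complex.exp (-2 * Complex.I * (α : ℂ)) = ((C : ℝ) : ℂ) - ((S : ℝ) : ℂ) * Complex.I := by
      rw [show (-2 * Complex.I * (α : ℂ)) = ((-(2 * α) : ℝ) : ℂ) * Complex.I by push_cast; ring,
        Complex.exp_mul_I, Complex.ofReal_cos, Complex.ofReal_sin, Complex.ofReal_neg,
        Complex.cos_neg, Complex.sin_neg]
      ring
    have hI : (Complex.I : ℂ) ^ 2 = -1 := Complex.I_sq
    have step3 : (2 - 2 * C) * g s + 2 * S * h s + (2 - 2 * C) * (2 * A) * r s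
        = Real.exp (-γ * s / 2) * (2 * U1 * Real.cos (ω * s) - 2 * U2 * Real.sin (ω * s)) := by
      rw [hg, hh, hr, hA, hU1, hU2]
      field_simp
      ring
    calc Complex.exp (Complex.I * μ * s) *
          (((g s : ℂ) + Complex.I * (h s : ℂ) + 2 * (A : ℂ) * (r s : ℂ))
            + (starRingEnd ℂ) ((g s : ℂ) + Complex.I * (h s : ℂ) + 2 * (A : ℂ) * (r s : ℂ))
            + Complex.exp (-2 * Complex.I * α) *
                (-(g s : ℂ) + Complex.I * (h s : ℂ) - 2 * (A : ℂ) * (r s : ℂ))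
            + Complex.exp (2 * Complex.I * α) *
                (-(g s : ℂ) - Complex.I * (h s : ℂ) - 2 * (A : ℂ) * (r s : ℂ)))
        = Complex.exp (Complex.I * μ * s) *
          (((2 - 2 * C) * g s + 2 * S * h s + (2 - 2 * C) * (2 * A) * r s : ℝ) : ℂ) := by
          rw [hconj, hT, hT']
          push_cast
          linear_combination (-2 * (S : ℂ) * ((h s : ℝ) : ℂ)
            * Complex.exp (Complex.I * (μ : ℂ) * (s : ℂ))) * hI
      _ = Complex.exp (Complex.I * μ * s) *
          ((Real.exp (-γ * s / 2) * (2 * U1 * Real.cos (ω * s) - 2 * U2 * Real.sin (ω * s)) : ℝ) : ℂ) := by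
          rw [step3]
      _ = U * Complex.exp (z1 * s) + W * Complex.exp (z2 * s) := by
          rw [e3, e4, hXc, hXs, hU, hW]
          push_cast
          linear_combination (-2 * ((U2 : ℝ) : ℂ) * Complex.exp (Complex.I * (μ : ℂ) * (s : ℂ))
            * Complex.exp (-(γ : ℂ) * (s : ℂ) / 2) * Complex.sin ((ω : ℂ) * (s : ℂ))) * hI
  have hint : (∫ s in Set.Ioi (0:ℝ), Complex.exp (Complex.I * μ * s) *
          (((g s : ℂ) + Complex.I * (h s : ℂ) + 2 * (A : ℂ) * (r s : ℂ))
            + (starRingEnd ℂ) ((g s : ℂ) + Complex.I * (h s : ℂ) + 2 * (A : ℂ) * (r s : ℂ))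
            + Complex.exp (-2 * Complex.I * α) *
                (-(g s : ℂ) + Complex.I * (h s : ℂ) - 2 * (A : ℂ) * (r s : ℂ))
            + Complex.exp (2 * Complex.I * α) *
                (-(g s : ℂ) - Complex.I * (h s : ℂ) - 2 * (A : ℂ) * (r s : ℂ))))
      = U * (-z1⁻¹) + W * (-z2⁻¹) := by
    rw [setIntegral_congr_fun measurableSet_Ioi (fun s _ => key s)]
    rw [integral_add ((integrableOn_cexp_Ioi hz1re).const_mul U)
        ((integrableOn_cexp_Ioi hz2re).const_mul W),
      integral_const_mul, integral_const_mul, integral_cexp_Ioi_s14 hz1re, integral_cexp_Ioi_s14 hz2re]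
  rw [hint, hD, hE]
  rw [hU, hW, hz1, hz2]
  simp only [Complex.mul_re, Complex.neg_re, Complex.neg_im, Complex.inv_re, Complex.inv_im,
    Complex.add_re, Complex.add_im, Complex.sub_re, Complex.sub_im, Complex.mul_im,
    Complex.I_re, Complex.I_im, Complex.ofReal_re, Complex.ofReal_im, Complex.normSq_apply,
    mul_zero, zero_mul, mul_one, one_mul, zero_add, add_zero, sub_zero, zero_sub, neg_neg, neg_zero]
  rw [show -(γ / 2) * -(γ / 2) + (μ + ω) * (μ + ω) = γ ^ 2 / 4 + (μ + ω) ^ 2 from by ring,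
    show -(γ / 2) * -(γ / 2) + (μ - ω) * (μ - ω) = γ ^ 2 / 4 + (μ - ω) ^ 2 from by ring]
  rw [hU1, hU2]
  rw [show Ω ^ 3 = Ω * (ω ^ 2 + γ ^ 2 / 4) by rw [← hsq']; ring]
  rw [hsq']
  have h1 : -(γ / 2) * -(γ / 2) + (μ + ω) * (μ + ω) ≠ 0 := by nlinarith [sq_nonneg (μ + ω)]
  have h2 : -(γ / 2) * -(γ / 2) + (μ - ω) * (μ - ω) ≠ 0 := by nlinarith [sq_nonneg (μ - ω)]
  have h3 : ω ^ 2 + γ ^ 2 / 4 ≠ 0 := by positivity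
  have h4 : γ ^ 2 / 4 + (μ + ω) ^ 2 ≠ 0 := by positivity
  have h5 : γ ^ 2 / 4 + (μ - ω) ^ 2 ≠ 0 := by positivity
  field_simp [h1, h2, h3, h4, h5]
  ring
end

section
/- Let γ, Ω be real with 0 < γ/2 < Ω, set ω := √(Ω² − γ²/4), let v ∈ ℝ with v ≠ 0, let c > 0, N ≥ 0, and let μ ∈ ℝ with μ² ≠ Ω². Define E(μ) := c·v²/Ω + (γ/(2ω))·(2N+1)·(1 + μ²/Ω²), D(μ) := (γ²/4 + (μ+ω)²)·(γ²/4 + (μ−ω)²), P := 1 − μ²/Ω², and the minimal quadrature variance Δ²₋(μ) := 1 + (2·c·v²·Ω³/D(μ))·( E(μ) − √(P² + E(μ)²) ). Then Δ²₋(μ) < 1, i.e. in the weak-interaction regime the scattered light is squeezed at every frequency μ with μ² ≠ Ω², for every admissible choice of the parameters. -/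
/-- In the weak-interaction regime the scattered light is squeezed at every frequency
`μ` with `μ² ≠ Ω²`: the minimal quadrature variance `Δ²₋(μ)` is strictly below the
coherent/vacuum level `1`, for every admissible choice of the parameters. -/
theorem squeezing_at_every_frequency
    (γ Ω : ℝ) (hγ : 0 < γ) (hΩ : γ / 2 < Ω)
    (ω : ℝ) (hω : ω = Real.sqrt (Ω ^ 2 - γ ^ 2 / 4))
    (v c N μ : ℝ) (hv : v ≠ 0) (hc : 0 < c) (hN : 0 ≤ N) (hμ : μ ^ 2 ≠ Ω ^ 2)
    (E D P Δm : ℝ)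
    (hE : E = c * v ^ 2 / Ω + (γ / (2 * ω)) * (2 * N + 1) * (1 + μ ^ 2 / Ω ^ 2))
    (hD : D = (γ ^ 2 / 4 + (μ + ω) ^ 2) * (γ ^ 2 / 4 + (μ - ω) ^ 2))
    (hP : P = 1 - μ ^ 2 / Ω ^ 2)
    (hΔm : Δm = 1 + (2 * c * v ^ 2 * Ω ^ 3 / D) * (E - Real.sqrt (P ^ 2 + E ^ 2))) :
    Δm < 1 := by
  have hΩ0 : 0 < Ω := lt_trans (by positivity) hΩ
  have hP0 : P ≠ 0 := by
    rw [hP]; intro h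
    apply hμ
    have h1 : μ ^ 2 / Ω ^ 2 = 1 := by linarith
    field_simp at h1; linarith
  have hD0 : 0 < D := by rw [hD]; positivity
  have hcoef : 0 < 2 * c * v ^ 2 * Ω ^ 3 / D := by positivity
  have hlt : E - Real.sqrt (P ^ 2 + E ^ 2) < 0 := by
    have h1 : E ≤ |E| := le_abs_self E
    have h2 : |E| = Real.sqrt (E ^ 2) := (Real.sqrt_sq_eq_abs E).symm
    have h3 : Real.sqrt (E ^ 2) < Real.sqrt (P ^ 2 + E ^ 2) := by
      apply Real.sqrt_lt_sqrt (by positivity)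
      have : 0 < P ^ 2 := by positivity
      linarith
    linarith
  rw [hΔm]
  linarith [mul_neg_of_pos_of_neg hcoef hlt]
end

section
/- Let γ > 0 and ω ∈ ℝ with ω ≠ 0, and let z ∈ ℂ. Suppose that Re( z / ( (γ/2 + i(ω + ν))·(γ/2 + i(ω − ν)) ) ) = 0 for every ν ∈ ℝ. Then z = 0. (This is the key step in the proof that the energy-equipartition requirement, imposed for every noise spectral density N(ν), forces the system operator in the Hudson–Parthasarathy equation to be R = √γ·a_m.) -/
/-- If `Re(z/((γ/2 + i(ω+ν))(γ/2 + i(ω−ν)))) = 0` for every real `ν`, then `z = 0`.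
This forces the system operator in the Hudson–Parthasarathy equation to be `R = √γ·a_m`
when energy equipartition is demanded for every noise spectral density. -/
theorem equipartition_forces_vanishing
    (γ ω : ℝ) (hγ : 0 < γ) (hω : ω ≠ 0) (z : ℂ)
    (h : ∀ ν : ℝ,
      (z / (((γ : ℂ) / 2 + Complex.I * ((ω : ℂ) + (ν : ℂ))) *
        ((γ : ℂ) / 2 + Complex.I * ((ω : ℂ) - (ν : ℂ))))).re = 0) :
    z = 0 := by
  have hB : γ * ω ≠ 0 := mul_ne_zero (ne_of_gt hγ) hω
  have key : ∀ ν : ℝ,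
      z.re * (γ^2/4 + ν^2 - ω^2) + z.im * (γ * ω) = 0 := by
    intro ν
    set D : ℂ := (((γ : ℂ) / 2 + Complex.I * ((ω : ℂ) + (ν : ℂ))) *
        ((γ : ℂ) / 2 + Complex.I * ((ω : ℂ) - (ν : ℂ))))
    have hDval : D = Complex.mk (γ^2/4 + ν^2 - ω^2) (γ * ω) := by
      apply Complex.ext <;> simp [D, Complex.ext_iff] <;> ring
    have hDre : D.re = γ^2/4 + ν^2 - ω^2 := by rw [hDval]
    have hDim : D.im = γ * ω := by rw [hDval]
    have hDne : D ≠ 0 := by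
      intro h0
      rw [h0] at hDim
      exact hB hDim.symm
    have hns : Complex.normSq D ≠ 0 := fun h0 => hDne (Complex.normSq_eq_zero.mp h0)
    have := h ν
    rw [Complex.div_re, hDre, hDim, ← add_div, div_eq_zero_iff] at this
    rcases this with h1 | h1
    · exact h1
    · exact absurd h1 hns
  have e0 := key 0
  have e1 := key 1
  have hre : z.re = 0 := by nlinarith [e0, e1]
  have him : z.im = 0 := by
    rw [hre] at e0
    simp at e0
    rcases e0 with h1 | h1 | h1
    · exact h1
    · exact absurd h1 hγ.ne'
    · exact absurd h1 hω
  exact Complex.ext hre him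
end
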